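/- Let N ≥ 2, let Γ : Fin N → ℝ, and let k : Fin N → ℂ be pairwise distinct and nonzero points such that for every m, (i/(2π k_m)) ∑_{n≠m} Γ_n / (conj(k_m) − conj(k_n)) = C for a fixed C ∈ ℂ with C ≠ 0. Then the linear momentum vanishes: ∑_m Γ_m k_m = 0; i.e., any genuinely self-similar (non-fixed) configuration has its center of vorticity at the origin. -/

import Mathlib

open Finset ComplexConjugate

theorem antisym_double_sum (N : ℕ) (g : Fin N → Fin N → ℂ)
    (hg : ∀ m n, g m n = - g n m) :
    ∑ m, ∑ n ∈ Finset.univ.erase m, g m n = 0 := by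
  have h2 : ∑ m, ∑ n ∈ Finset.univ.erase m, g m n
      = ∑ p ∈ Finset.univ.offDiag, g p.1 p.2 := by
    rw [Finset.sum_sigma']
    apply Finset.sum_nbij' (fun p => (p.1, p.2)) (fun p => ⟨p.1, p.2⟩) <;>
      simp only [Finset.mem_sigma, Finset.mem_offDiag, Finset.mem_erase,
        Finset.mem_univ, and_true, true_and] <;>
      (intro p hp; first | exact Ne.symm hp | trivial)
  rw [h2]
  apply Finset.sum_involution (fun p _ => (p.2, p.1))
  · intro p _
    rw [hg p.1 p.2]; ring
  · intro p hp hne h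
    have h1 : p.1 = p.2 := congrArg Prod.snd h
    simp only [Finset.mem_offDiag] at hp
    exact hp.2.2 h1
  · intro p hp
    simp only [Finset.mem_offDiag] at *
    tauto
  · intro p _; rfl

/-- For a self-similar configuration with constant `C ≠ 0`, the linear momentum
vanishes: `∑ Γ_m k_m = 0`, i.e. the center of vorticity is at the origin. -/
theorem self_similar_momentum_vanishes (N : ℕ) (hN : 2 ≤ N) (Γ : Fin N → ℝ)
    (k : Fin N → ℂ)
    (hk : ∀ m n : Fin N, m ≠ n → k m ≠ k n) (hk0 : ∀ m, k m ≠ 0)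
    (C : ℂ) (hC : C ≠ 0)
    (hss : ∀ m : Fin N,
      Complex.I / (2 * (Real.pi : ℂ) * k m) *
          ∑ n ∈ Finset.univ.erase m, (Γ n : ℂ) / (conj (k m) - conj (k n))
        = C) :
    ∑ m, (Γ m : ℂ) * k m = 0 := by
  have hpi : (Real.pi : ℂ) ≠ 0 := by
    exact_mod_cast Real.pi_ne_zero
  have hS : ∀ m, ∑ n ∈ Finset.univ.erase m, (Γ n : ℂ) / (conj (k m) - conj (k n))
      = C * (2 * (Real.pi : ℂ) * k m) / Complex.I := by
    intro m
    have h := hss m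
    rw [div_mul_eq_mul_div, div_eq_iff (by
      simp [hpi, hk0 m, two_ne_zero])] at h
    rw [eq_div_iff Complex.I_ne_zero]
    linear_combination h
  have key : ∑ m, (Γ m : ℂ) *
      ∑ n ∈ Finset.univ.erase m, (Γ n : ℂ) / (conj (k m) - conj (k n)) = 0 := by
    have := antisym_double_sum N
      (fun m n => (Γ m : ℂ) * ((Γ n : ℂ) / (conj (k m) - conj (k n))))
      (by intro m n
          have h1 : conj (k n) - conj (k m) = -(conj (k m) - conj (k n)) := by ring
          rw [h1, div_neg]; ring)
    rw [← this]
    simp [Finset.mul_sum]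
  have key2 : ∑ m, (Γ m : ℂ) * (C * (2 * (Real.pi : ℂ) * k m) / Complex.I) = 0 := by
    rw [← key]; apply Finset.sum_congr rfl; intro m _; rw [hS m]
  have : (C * 2 * (Real.pi : ℂ) / Complex.I) * ∑ m, (Γ m : ℂ) * k m = 0 := by
    rw [Finset.mul_sum, ← key2]
    apply Finset.sum_congr rfl; intro m _; ring
  have hc : (C * 2 * (Real.pi : ℂ) / Complex.I) ≠ 0 := by
    apply div_ne_zero _ Complex.I_ne_zero
    simp [hC, hpi]
  exact (mul_eq_zero.mp this).resolve_left hc
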